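/- For the modularity function F_{ij}(G) = (N/(4m))(A_{ij} - d_i d_j/(2m)), if G' is obtained from G by adding one edge (so G' has m+1 edges, degrees d'_i), then for all pairs (i,j), |F_{ij}(G) - F_{ij}(G')| ≤ 11N/(8m). -/

import Mathlib

open scoped Classical

lemma aux_est (c c' u u' a a' M : ℝ) (hM : 1 ≤ M)
    (hc0 : 0 ≤ c) (hcc' : c' ≤ c) (hcc : (c - c')*(M+1) = c)
    (ha : 0 ≤ a) (ha1 : a ≤ 1) (ha' : 0 ≤ a') (ha1' : a' ≤ 1)
    (hu0 : 0 ≤ u) (hu'0 : 0 ≤ u') (hu'M : u' ≤ (M+1)/2)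
    (hd1 : u' - u ≤ 1) (hd2 : u - u' ≤ 1/2) :
    |c*(a-u) - c'*(a'-u')| ≤ (11/2)*c := by
  have hid : c*(a - u) - c'*(a' - u') = c*(a - a') + c*(u' - u) + (c - c')*(a' - u') := by ring
  have hcc0 : 0 ≤ c - c' := by linarith
  have h1a : c*(a - a') ≤ c := by nlinarith
  have h1b : -c ≤ c*(a - a') := by nlinarith
  have h2a : c*(u' - u) ≤ c := by nlinarith
  have h2b : -(c/2) ≤ c*(u' - u) := by nlinarith
  have h3a : (c - c')*(a' - u') ≤ c/2 := by nlinarith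
  have h3b : -(c/2) ≤ (c - c')*(a' - u') := by nlinarith
  rw [abs_le]
  constructor <;> linarith

lemma real_est (n M a a' x y x' y' : ℝ) (hM : 1 ≤ M) (hn : 0 ≤ n)
    (ha : 0 ≤ a) (ha1 : a ≤ 1) (ha' : 0 ≤ a') (ha1' : a' ≤ 1)
    (hx0 : 0 ≤ x) (hx : x ≤ M) (hy0 : 0 ≤ y) (hy : y ≤ M)
    (hxx : x ≤ x') (hx'1 : x' ≤ x + 1) (hyy : y ≤ y') (hy'1 : y' ≤ y + 1) :
    |n/(4*M)*(a - x*y/(2*M)) - n/(4*(M+1))*(a' - x'*y'/(2*(M+1)))| ≤ 11*n/(8*M) := by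
  have hM0 : (0:ℝ) < M := by linarith
  have hM1 : (0:ℝ) < M + 1 := by linarith
  have hx'0 : 0 ≤ x' := le_trans hx0 hxx
  have hy'0 : 0 ≤ y' := le_trans hy0 hyy
  have hxy : x * y ≤ x' * y' := mul_le_mul hxx hyy hy0 hx'0
  have hxy2 : x' * y' ≤ (x+1) * (y+1) := mul_le_mul hx'1 hy'1 hy'0 (by linarith)
  have hxyM : x * y ≤ M * M := mul_le_mul hx hy hy0 (by linarith)
  calc |n/(4*M)*(a - x*y/(2*M)) - n/(4*(M+1))*(a' - x'*y'/(2*(M+1)))|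
      ≤ (11/2) * (n/(4*M)) := by
        apply aux_est _ _ _ _ _ _ M hM
        · positivity
        · gcongr
          linarith
        · field_simp
          ring
        · exact ha
        · exact ha1
        · exact ha'
        · exact ha1'
        · positivity
        · positivity
        · rw [div_le_div_iff₀ (by positivity) (by norm_num)]
          nlinarith
        · rw [div_sub_div _ _ (by positivity) (by positivity), div_le_one (by positivity)]
          nlinarith [mul_nonneg hx0 hy0, mul_le_mul_of_nonneg_left hx (by linarith : (0:ℝ) ≤ 2*M),
            mul_le_mul_of_nonneg_left hy (by linarith : (0:ℝ) ≤ 2*M)]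
        · rw [div_sub_div _ _ (by positivity) (by positivity), div_le_iff₀ (by positivity)]
          nlinarith
    _ = 11*n/(8*M) := by ring

lemma deg_le_edges {N : ℕ} (G : SimpleGraph (Fin N)) (i : Fin N) :
    (G.neighborSet i).ncard ≤ G.edgeSet.ncard := by
  apply Set.ncard_le_ncard_of_injOn (fun v => s(i, v))
  · intro v hv
    exact G.mem_edgeSet.mpr hv
  · intro a _ b _ h
    exact Sym2.congr_right.mp h

lemma deg_mono {N : ℕ} (G G' : SimpleGraph (Fin N)) (i₀ j₀ : Fin N)
    (hG' : ∀ i j, G'.Adj i j ↔ G.Adj i j ∨ (i = i₀ ∧ j = j₀) ∨ (i = j₀ ∧ j = i₀))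
    (i : Fin N) : (G.neighborSet i).ncard ≤ (G'.neighborSet i).ncard := by
  apply Set.ncard_le_ncard _ (Set.toFinite _)
  intro v hv
  exact (hG' i v).mpr (Or.inl hv)

lemma deg_add_one {N : ℕ} (G G' : SimpleGraph (Fin N)) (i₀ j₀ : Fin N) (hne : i₀ ≠ j₀)
    (hG' : ∀ i j, G'.Adj i j ↔ G.Adj i j ∨ (i = i₀ ∧ j = j₀) ∨ (i = j₀ ∧ j = i₀))
    (i : Fin N) : (G'.neighborSet i).ncard ≤ (G.neighborSet i).ncard + 1 := by
  classical
  set w : Fin N := if i = i₀ then j₀ else i₀ with hw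
  have hsub : G'.neighborSet i ⊆ insert w (G.neighborSet i) := by
    intro v hv
    rcases (hG' i v).mp hv with h | ⟨hi, hv'⟩ | ⟨hi, hv'⟩
    · exact Set.mem_insert_of_mem _ h
    · rw [hw, if_pos hi, ← hv']
      exact Set.mem_insert v _
    · have hii : i ≠ i₀ := by
        rw [hi]; exact Ne.symm hne
      rw [hw, if_neg hii, ← hv']
      exact Set.mem_insert v _
  calc (G'.neighborSet i).ncard ≤ (insert w (G.neighborSet i)).ncard :=
        Set.ncard_le_ncard hsub (Set.toFinite _)
    _ ≤ (G.neighborSet i).ncard + 1 := Set.ncard_insert_le _ _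

/-- Modularity one-edge estimate: for the modularity function
`F_{ij}(G) = (N/(4m))(A_{ij} - dᵢdⱼ/(2m))`, if `G'` is obtained from `G` (with `m ≥ 1`
edges) by adding the edge `{i₀, j₀}`, then `|F_{ij}(G) - F_{ij}(G')| ≤ 11N/(8m)`
for all pairs `(i,j)`. -/
theorem modularity_one_edge_estimate {N : ℕ} (G G' : SimpleGraph (Fin N))
    (i₀ j₀ : Fin N) (hne : i₀ ≠ j₀) (hnadj : ¬G.Adj i₀ j₀)
    (hG' : ∀ i j, G'.Adj i j ↔ G.Adj i j ∨ (i = i₀ ∧ j = j₀) ∨ (i = j₀ ∧ j = i₀))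
    (m : ℕ) (hm : m = G.edgeSet.ncard) (hm1 : 1 ≤ m) :
    ∀ i j : Fin N,
      |(N : ℝ) / (4 * m) *
          ((if G.Adj i j then (1 : ℝ) else 0) -
            ((G.neighborSet i).ncard : ℝ) * ((G.neighborSet j).ncard : ℝ) / (2 * m)) -
        (N : ℝ) / (4 * (m + 1)) *
          ((if G'.Adj i j then (1 : ℝ) else 0) -
            ((G'.neighborSet i).ncard : ℝ) * ((G'.neighborSet j).ncard : ℝ) /
              (2 * (m + 1)))| ≤ 11 * N / (8 * m) := by
  intro i j
  have hdi : (G.neighborSet i).ncard ≤ m := hm ▸ deg_le_edges G i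
  have hdj : (G.neighborSet j).ncard ≤ m := hm ▸ deg_le_edges G j
  have hdi' : (G.neighborSet i).ncard ≤ (G'.neighborSet i).ncard := deg_mono G G' i₀ j₀ hG' i
  have hdj' : (G.neighborSet j).ncard ≤ (G'.neighborSet j).ncard := deg_mono G G' i₀ j₀ hG' j
  have hdi1 : (G'.neighborSet i).ncard ≤ (G.neighborSet i).ncard + 1 :=
    deg_add_one G G' i₀ j₀ hne hG' i
  have hdj1 : (G'.neighborSet j).ncard ≤ (G.neighborSet j).ncard + 1 :=
    deg_add_one G G' i₀ j₀ hne hG' j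
  apply real_est N m _ _ _ _ _ _
  · exact_mod_cast hm1
  · exact Nat.cast_nonneg N
  · split_ifs <;> norm_num
  · split_ifs <;> norm_num
  · split_ifs <;> norm_num
  · split_ifs <;> norm_num
  · exact Nat.cast_nonneg _
  · exact_mod_cast hdi
  · exact Nat.cast_nonneg _
  · exact_mod_cast hdj
  · exact_mod_cast hdi'
  · exact_mod_cast hdi1
  · exact_mod_cast hdj'
  · exact_mod_cast hdj1
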